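/- Let q be a prime power, n ≥ 1, and let S be a semifield multiplication on F_{q^n} over F_q, i.e., a presemifield multiplication possessing a two-sided identity element. Suppose the middle nucleus N_m(S) = {z : S(S(x,z),y) = S(x,S(z,y)) for all x, y} has q^{n/m} elements and the right nucleus N_r(S) = {z : S(S(x,y),z) = S(x,S(y,z)) for all x, y} has q^{n/r} elements (so that S has dimension m over its middle nucleus and dimension r over its right nucleus). Then brk(S) ≤ min{m, r}. -/

import Mathlib

set_option maxHeartbeats 1000000
set_option synthInstance.maxHeartbeats 400000

open Polynomial IntermediateField

/-- An opaque wrapper used to carry exotic module structures. -/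
structure Wrap (i : ℕ) (K : Type) : Type where
  val : K

namespace Wrap

variable {i : ℕ} {K : Type}

def equiv (i : ℕ) (K : Type) : Wrap i K ≃ K :=
  ⟨Wrap.val, Wrap.mk, fun ⟨_⟩ => rfl, fun _ => rfl⟩

@[ext] lemma ext {a b : Wrap i K} (h : a.val = b.val) : a = b := by
  cases a; cases b; cases h; rfl

instance [AddCommGroup K] : AddCommGroup (Wrap i K) := (equiv i K).addCommGroup

@[simp] lemma add_val [AddCommGroup K] (a b : Wrap i K) : (a + b).val = a.val + b.val := rfl
@[simp] lemma zero_val [AddCommGroup K] : (0 : Wrap i K).val = 0 := rfl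

instance (F : Type) [Semiring F] [AddCommGroup K] [Module F K] : Module F (Wrap i K) where
  smul a w := ⟨a • w.val⟩
  one_smul w := Wrap.ext (one_smul _ _)
  mul_smul a b w := Wrap.ext (mul_smul _ _ _)
  smul_zero a := Wrap.ext (smul_zero _)
  smul_add a w w' := Wrap.ext (smul_add _ _ _)
  add_smul a b w := Wrap.ext (add_smul _ _ _)
  zero_smul w := Wrap.ext (zero_smul _ _)

@[simp] lemma smul_val (F : Type) [Semiring F] [AddCommGroup K] [Module F K]
    (a : F) (w : Wrap i K) : (a • w).val = a • w.val := rfl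

instance [Finite K] : Finite (Wrap i K) := Finite.of_equiv K (equiv i K).symm

noncomputable instance [Fintype K] : Fintype (Wrap i K) := Fintype.ofEquiv K (equiv i K).symm

lemma card (i : ℕ) (K : Type) [Fintype K] : Fintype.card (Wrap i K) = Fintype.card K :=
  Fintype.card_congr (equiv i K)

/-- The unwrapping map as an `F`-linear equivalence. -/
def lequiv (i : ℕ) (F K : Type) [Semiring F] [AddCommGroup K] [Module F K] :
    Wrap i K ≃ₗ[F] K where
  toFun := Wrap.val
  invFun := Wrap.mk
  map_add' _ _ := rfl
  map_smul' _ _ := rfl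
  left_inv := fun ⟨_⟩ => rfl
  right_inv := fun _ => rfl

end Wrap

/-- Compute the dimension of a finite vector space from cardinalities. -/
lemma finrank_of_card (q d k : ℕ) (hq : 2 ≤ q) (hd : 1 ≤ d)
    (N V : Type) [DivisionRing N] [Fintype N] [AddCommGroup V] [Module N V] [Fintype V]
    (hN : Fintype.card N = q ^ d) (hV : Fintype.card V = q ^ (d * k)) :
    Module.finrank N V = k := by
  have h := Module.card_eq_pow_finrank (K := N) (V := V)
  rw [hN, hV, ← pow_mul] at h
  have := Nat.pow_right_injective hq h
  exact (Nat.eq_of_mul_eq_mul_left (by omega) this.symm)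

/-- An `F`-algebra which is a finite field whose elements all satisfy `x^(card K) = x`
embeds `F`-algebraically into the finite field `K`. -/
lemma embed_exists (F N K : Type) [Field F] [Field N] [Field K]
    [Algebra F N] [Algebra F K] [Finite N] [Fintype K]
    (hpow : ∀ x : N, x ^ (Fintype.card K) = x) :
    Nonempty (N →ₐ[F] K) := by
  classical
  obtain ⟨α, hα⟩ := Field.exists_primitive_element_of_finite_top F N
  have hint : IsIntegral F α := Algebra.IsIntegral.isIntegral α
  have hdvd : minpoly F α ∣ (X ^ (Fintype.card K) - X : F[X]) := by
    apply minpoly.dvd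
    simp [hpow α]
  have hsplits : Splits ((X ^ (Fintype.card K) - X : F[X]).map (algebraMap F K)) := by
    have : ((X ^ (Fintype.card K) - X : F[X]).map (algebraMap F K))
        = (X ^ (Fintype.card K) - X : K[X]) := by
      simp [Polynomial.map_sub, Polynomial.map_pow]
    rw [this, splits_iff_card_roots, FiniteField.roots_X_pow_card_sub_X,
      FiniteField.X_pow_card_sub_X_natDegree_eq K Fintype.one_lt_card]
    simp
  have hne : (X ^ (Fintype.card K) - X : F[X]) ≠ 0 :=
    FiniteField.X_pow_card_sub_X_ne_zero F Fintype.one_lt_card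
  have hs : Splits ((minpoly F α).map (algebraMap F K)) :=
    hsplits.of_dvd ((Polynomial.map_ne_zero_iff (algebraMap F K).injective).mpr hne)
      (Polynomial.map_dvd _ hdvd)
  obtain ⟨y, hy⟩ := hs.exists_eval_eq_zero
    (by rw [degree_map]; exact ne_of_gt (minpoly.degree_pos hint))
  have hy' : aeval y (minpoly F α) = 0 := by
    rwa [aeval_def, eval₂_eq_eval_map]
  let pb := IntermediateField.adjoin.powerBasis hint
  have hgen : aeval y (minpoly F pb.gen) = 0 := by
    rw [IntermediateField.adjoin.powerBasis_gen, IntermediateField.minpoly_gen]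
    exact hy'
  let ψ : F⟮α⟯ →ₐ[F] K := pb.lift y hgen
  exact ⟨ψ.comp (((IntermediateField.equivOfEq hα).trans IntermediateField.topEquiv).symm.toAlgHom)⟩

section Nuc

variable {F K : Type} [Field F] [Field K] [Algebra F K]
variable (S : K →ₗ[F] K →ₗ[F] K) (e : K)
variable (P : Submodule F K) (heP : e ∈ P)
variable (hcl : ∀ ⦃z z' : K⦄, z ∈ P → z' ∈ P → S z z' ∈ P)
variable (hassoc : ∀ ⦃z₁ z₂ z₃ : K⦄, z₁ ∈ P → z₂ ∈ P → z₃ ∈ P →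
  S (S z₁ z₂) z₃ = S z₁ (S z₂ z₃))
variable (he1 : ∀ x : K, S e x = x) (he2 : ∀ x : K, S x e = x)

/-- Ring structure on a nucleus. -/
@[reducible] def nucRing : Ring ↥P :=
  { (inferInstance : AddCommGroup ↥P) with
    mul := fun z z' => ⟨S z.val z'.val, hcl z.2 z'.2⟩
    one := ⟨e, heP⟩
    left_distrib := fun a b c => Subtype.ext
      (show S a.val (b.val + c.val) = S a.val b.val + S a.val c.val by simp)
    right_distrib := fun a b c => Subtype.ext
      (show S (a.val + b.val) c.val = S a.val c.val + S b.val c.val by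
        simp [map_add, LinearMap.add_apply])
    zero_mul := fun a => Subtype.ext (show S (0 : K) a.val = 0 by simp)
    mul_zero := fun a => Subtype.ext (show S a.val (0 : K) = 0 by simp)
    mul_assoc := fun a b c => Subtype.ext (hassoc a.2 b.2 c.2)
    one_mul := fun a => Subtype.ext (he1 a.val)
    mul_one := fun a => Subtype.ext (he2 a.val) }

end Nuc

/-- `S` and `S'` are isotopic over `F`: there are bijective `F`-linear maps `Fm, Gm, Hm`
with `S'(Fm x, Gm y) = Hm (S x y)` for all `x, y`. -/
def Isotopic (F K : Type) [Field F] [Field K] [Algebra F K]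
    (S S' : K → K → K) : Prop :=
  ∃ Fm Gm Hm : K ≃ₗ[F] K, ∀ x y : K, S' (Fm x) (Gm y) = Hm (S x y)

/-- The set of `r` such that some multiplication isotopic to `S` over `F` has the form
`(x,y) ↦ ∑_{i=1}^r gᵢ(fᵢ(x)·y)` with `F`-linear `fᵢ, gᵢ`; the BEL-rank `brk(S)` is its
infimum. -/
def brkSet (F K : Type) [Field F] [Field K] [Algebra F K]
    (S : K → K → K) : Set ℕ :=
  {r | ∃ (S' : K → K → K) (f g : Fin r → (K →ₗ[F] K)),
    Isotopic F K S S' ∧ ∀ x y : K, S' x y = ∑ i : Fin r, g i (f i x * y)}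

open Module in
lemma mid_mem (q n : ℕ) (hq : IsPrimePow q) (hn : 1 ≤ n)
    (F K : Type) [Field F] [Field K] [Algebra F K] [Fintype F] [Fintype K]
    (hcK : Fintype.card K = q ^ n)
    (S : K →ₗ[F] K →ₗ[F] K)
    (hpre : ∀ x y : K, S x y = 0 → x = 0 ∨ y = 0)
    (e : K) (he : ∀ x : K, S e x = x ∧ S x e = x)
    (m : ℕ) (hm1 : 1 ≤ m) (hmn : m ∣ n)
    (hNm : Nat.card {z : K // ∀ x y : K, S (S x z) y = S x (S z y)} = q ^ (n / m)) :
    m ∈ brkSet F K (fun x y => S x y) := by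
  classical
  have hq2 : 2 ≤ q := hq.two_le
  have he1 : ∀ x, S e x = x := fun x => (he x).1
  have he2 : ∀ x, S x e = x := fun x => (he x).2
  have hene : e ≠ 0 := by
    intro h
    have h1 := he1 1
    rw [h] at h1
    simp at h1
  set d := n / m with hd
  have hdm : d * m = n := by rw [hd, Nat.div_mul_cancel hmn]
  have hd1 : 1 ≤ d := by
    rcases Nat.eq_zero_or_pos d with h | h
    · rw [h, zero_mul] at hdm; omega
    · exact h
  -- the middle nucleus as a submodule
  let P : Submodule F K :=
    { carrier := {z | ∀ x y : K, S (S x z) y = S x (S z y)}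
      add_mem' := by
        intro a b ha hb x y
        simp only [map_add, LinearMap.add_apply, ha x y, hb x y]
      zero_mem' := by intro x y; simp
      smul_mem' := by
        intro c a ha x y
        simp only [map_smul, LinearMap.smul_apply, ha x y] }
  have hP : ∀ z : K, z ∈ P → ∀ x y : K, S (S x z) y = S x (S z y) := fun z hz => hz
  have heP : e ∈ P := by
    intro x y
    rw [he2, he1]
  have hcl : ∀ ⦃z z' : K⦄, z ∈ P → z' ∈ P → S z z' ∈ P := by
    intro z z' hz hz' x y
    calc S (S x (S z z')) y = S (S (S x z) z') y := by rw [hz x z']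
      _ = S (S x z) (S z' y) := hz' (S x z) y
      _ = S x (S z (S z' y)) := hz x (S z' y)
      _ = S x (S (S z z') y) := by rw [hz' z y]
  have hassoc : ∀ ⦃z₁ z₂ z₃ : K⦄, z₁ ∈ P → z₂ ∈ P → z₃ ∈ P →
      S (S z₁ z₂) z₃ = S z₁ (S z₂ z₃) := fun z₁ z₂ z₃ h₁ h₂ _ => h₂ z₁ z₃
  letI : Ring ↥P := nucRing S e P heP hcl hassoc he1 he2
  have hmul : ∀ z z' : ↥P, (z * z').val = S z.val z'.val := fun z z' => rfl
  have hone : (1 : ↥P).val = e := rfl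
  haveI : Nontrivial ↥P :=
    ⟨⟨1, 0, fun h => hene (by simpa [hone] using congrArg Subtype.val h)⟩⟩
  haveI : NoZeroDivisors ↥P := ⟨by
    rintro a b h
    rcases hpre a.val b.val (by simpa [hmul] using congrArg Subtype.val h) with h' | h'
    · exact Or.inl (Subtype.ext h')
    · exact Or.inr (Subtype.ext h')⟩
  haveI : IsDomain ↥P := NoZeroDivisors.to_isDomain _
  letI : DivisionRing ↥P := Fintype.divisionRingOfIsDomain ↥P
  letI : Field ↥P := littleWedderburn ↥P
  letI : Algebra F ↥P := Algebra.ofModule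
    (fun a z z' => Subtype.ext (show S (a • z.val) z'.val = a • S z.val z'.val by simp))
    (fun a z z' => Subtype.ext (show S z.val (a • z'.val) = a • S z.val z'.val by simp))
  have hcardP : Fintype.card ↥P = q ^ d := by
    rw [← Nat.card_eq_fintype_card]
    exact (Nat.card_congr (Equiv.subtypeEquivRight (fun z => Iff.rfl))).trans hNm
  have hpow : ∀ x : ↥P, x ^ (Fintype.card K) = x := by
    intro x
    have hc : Fintype.card K = (Fintype.card ↥P) ^ m := by
      rw [hcardP, hcK, ← pow_mul, hdm]
    rw [hc]
    exact FiniteField.pow_card_pow m x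
  obtain ⟨φ⟩ := embed_exists F ↥P K hpow
  letI : Algebra ↥P K := φ.toRingHom.toAlgebra
  haveI : IsScalarTower F ↥P K :=
    IsScalarTower.of_algebraMap_eq (fun a => (φ.commutes a).symm)
  haveI : FiniteDimensional ↥P K := Module.Finite.of_finite
  have frK : finrank ↥P K = m :=
    finrank_of_card q d m hq2 hd1 ↥P K hcardP (by rw [hcK, hdm])
  -- the two exotic module structures
  letI M1 : Module ↥P (Wrap 1 K) :=
    { smul := fun z w => ⟨S w.val z.val⟩
      one_smul := fun w => Wrap.ext (he2 w.val)
      mul_smul := fun z z' w => Wrap.ext (by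
        have hc : S z.val z'.val = S z'.val z.val := congrArg Subtype.val (mul_comm z z')
        show S w.val (S z.val z'.val) = S (S w.val z'.val) z.val
        rw [hc]
        exact (hP z'.val z'.2 w.val z.val).symm)
      smul_zero := fun z => Wrap.ext (show S (0 : K) z.val = 0 by simp)
      smul_add := fun z w w' => Wrap.ext
        (show S (w.val + w'.val) z.val = S w.val z.val + S w'.val z.val by simp)
      add_smul := fun z z' w => Wrap.ext
        (show S w.val (z.val + z'.val) = S w.val z.val + S w.val z'.val by simp)
      zero_smul := fun w => Wrap.ext (show S w.val (0 : K) = 0 by simp) }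
  letI M2 : Module ↥P (Wrap 2 K) :=
    { smul := fun z w => ⟨S z.val w.val⟩
      one_smul := fun w => Wrap.ext (he1 w.val)
      mul_smul := fun z z' w => Wrap.ext
        (show S (S z.val z'.val) w.val = S z.val (S z'.val w.val) from
          hP z'.val z'.2 z.val w.val)
      smul_zero := fun z => Wrap.ext (show S z.val (0 : K) = 0 by simp)
      smul_add := fun z w w' => Wrap.ext
        (show S z.val (w.val + w'.val) = S z.val w.val + S z.val w'.val by simp)
      add_smul := fun z z' w => Wrap.ext
        (show S (z.val + z'.val) w.val = S z.val w.val + S z'.val w.val by simp)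
      zero_smul := fun w => Wrap.ext (show S (0 : K) w.val = 0 by simp) }
  haveI : IsScalarTower F ↥P (Wrap 1 K) := ⟨fun a z w => Wrap.ext
    (show S w.val (a • z.val) = a • S w.val z.val by simp)⟩
  haveI : IsScalarTower F ↥P (Wrap 2 K) := ⟨fun a z w => Wrap.ext
    (show S (a • z.val) w.val = a • S z.val w.val by simp)⟩
  haveI : FiniteDimensional ↥P (Wrap 1 K) := Module.Finite.of_finite
  haveI : FiniteDimensional ↥P (Wrap 2 K) := Module.Finite.of_finite
  have fr1 : finrank ↥P (Wrap 1 K) = m :=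
    finrank_of_card q d m hq2 hd1 ↥P _ hcardP (by rw [Wrap.card, hcK, hdm])
  have fr2 : finrank ↥P (Wrap 2 K) = m :=
    finrank_of_card q d m hq2 hd1 ↥P _ hcardP (by rw [Wrap.card, hcK, hdm])
  let T1 : Wrap 1 K ≃ₗ[↥P] K := LinearEquiv.ofFinrankEq _ _ (by rw [fr1, frK])
  let T2 : Wrap 2 K ≃ₗ[↥P] K := LinearEquiv.ofFinrankEq _ _ (by rw [fr2, frK])
  let b : Basis (Fin m) ↥P K := Module.finBasisOfFinrankEq ↥P K frK
  let S' : K → K → K := fun x y => S (T1.symm x).val (T2.symm y).val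
  let f : Fin m → (K →ₗ[F] K) := fun i =>
    { toFun := fun x => algebraMap ↥P K (b.repr x i)
      map_add' := by
        intro x y
        rw [map_add, Finsupp.add_apply, map_add]
      map_smul' := by
        intro a x
        have h1 : b.repr (a • x) i = algebraMap F ↥P a * b.repr x i := by
          rw [← IsScalarTower.algebraMap_smul (↥P) a x, map_smul, Finsupp.smul_apply,
            smul_eq_mul]
        rw [h1, map_mul, ← IsScalarTower.algebraMap_apply, RingHom.id_apply,
          ← Algebra.smul_def] }
  let g : Fin m → (K →ₗ[F] K) := fun i =>
    (S (T1.symm (b i)).val) ∘ₗ (Wrap.lequiv 2 F K).toLinearMap ∘ₗ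
      ((T2.restrictScalars F).symm : K →ₗ[F] Wrap 2 K)
  let Fm : K ≃ₗ[F] K := (Wrap.lequiv 1 F K).symm.trans (T1.restrictScalars F)
  let Gm : K ≃ₗ[F] K := (Wrap.lequiv 2 F K).symm.trans (T2.restrictScalars F)
  refine ⟨S', f, g, ⟨Fm, Gm, LinearEquiv.refl F K, ?_⟩, ?_⟩
  · intro x y
    show S (T1.symm (T1 ⟨x⟩)).val (T2.symm (T2 ⟨y⟩)).val = S x y
    rw [T1.symm_apply_apply, T2.symm_apply_apply]
  · intro x y
    have hbal : ∀ (z : ↥P) (u y' : K), S' (z • u) y' = S' u (z • y') := by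
      intro z u y'
      show S (T1.symm (z • u)).val (T2.symm y').val
        = S (T1.symm u).val (T2.symm (z • y')).val
      rw [map_smul, map_smul]
      show S (S (T1.symm u).val z.val) (T2.symm y').val
        = S (T1.symm u).val (S z.val (T2.symm y').val)
      exact hP z.val z.2 _ _
    let L : K →ₗ[F] K := (S.flip ((T2.symm y).val)) ∘ₗ (Wrap.lequiv 1 F K).toLinearMap ∘ₗ
      ((T1.restrictScalars F).symm : K →ₗ[F] Wrap 1 K)
    have hLx : ∀ u : K, L u = S' u y := fun u => rfl
    calc S' x y = L x := (hLx x).symm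
      _ = L (∑ i, b.repr x i • b i) := by rw [b.sum_repr]
      _ = ∑ i, L (b.repr x i • b i) := map_sum L _ _
      _ = ∑ i, g i (f i x * y) := by
          refine Finset.sum_congr rfl (fun i _ => ?_)
          rw [hLx, hbal, Algebra.smul_def]
          rfl

open Module in
lemma right_mem (q n : ℕ) (hq : IsPrimePow q) (hn : 1 ≤ n)
    (F K : Type) [Field F] [Field K] [Algebra F K] [Fintype F] [Fintype K]
    (hcK : Fintype.card K = q ^ n)
    (S : K →ₗ[F] K →ₗ[F] K)
    (hpre : ∀ x y : K, S x y = 0 → x = 0 ∨ y = 0)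
    (e : K) (he : ∀ x : K, S e x = x ∧ S x e = x)
    (r : ℕ) (hr1 : 1 ≤ r) (hrn : r ∣ n)
    (hNr : Nat.card {z : K // ∀ x y : K, S (S x y) z = S x (S y z)} = q ^ (n / r)) :
    r ∈ brkSet F K (fun x y => S x y) := by
  classical
  have hq2 : 2 ≤ q := hq.two_le
  have he1 : ∀ x, S e x = x := fun x => (he x).1
  have he2 : ∀ x, S x e = x := fun x => (he x).2
  have hene : e ≠ 0 := by
    intro h
    have h1 := he1 1
    rw [h] at h1
    simp at h1
  set d := n / r with hd
  have hdm : d * r = n := by rw [hd, Nat.div_mul_cancel hrn]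
  have hd1 : 1 ≤ d := by
    rcases Nat.eq_zero_or_pos d with h | h
    · rw [h, zero_mul] at hdm; omega
    · exact h
  -- the right nucleus as a submodule
  let P : Submodule F K :=
    { carrier := {z | ∀ x y : K, S (S x y) z = S x (S y z)}
      add_mem' := by
        intro a b ha hb x y
        simp only [map_add, LinearMap.add_apply, ha x y, hb x y]
      zero_mem' := by intro x y; simp
      smul_mem' := by
        intro c a ha x y
        simp only [map_smul, LinearMap.smul_apply, ha x y] }
  have hP : ∀ z : K, z ∈ P → ∀ x y : K, S (S x y) z = S x (S y z) := fun z hz => hz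
  have heP : e ∈ P := by
    intro x y
    rw [he2, he2]
  have hcl : ∀ ⦃z z' : K⦄, z ∈ P → z' ∈ P → S z z' ∈ P := by
    intro z z' hz hz' x y
    calc S (S x y) (S z z') = S (S (S x y) z) z' := (hz' (S x y) z).symm
      _ = S (S x (S y z)) z' := by rw [hz x y]
      _ = S x (S (S y z) z') := hz' x (S y z)
      _ = S x (S y (S z z')) := by rw [hz' y z]
  have hassoc : ∀ ⦃z₁ z₂ z₃ : K⦄, z₁ ∈ P → z₂ ∈ P → z₃ ∈ P →
      S (S z₁ z₂) z₃ = S z₁ (S z₂ z₃) := fun z₁ z₂ z₃ _ _ h₃ => h₃ z₁ z₂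
  letI : Ring ↥P := nucRing S e P heP hcl hassoc he1 he2
  have hmul : ∀ z z' : ↥P, (z * z').val = S z.val z'.val := fun z z' => rfl
  have hone : (1 : ↥P).val = e := rfl
  haveI : Nontrivial ↥P :=
    ⟨⟨1, 0, fun h => hene (by simpa [hone] using congrArg Subtype.val h)⟩⟩
  haveI : NoZeroDivisors ↥P := ⟨by
    rintro a b h
    rcases hpre a.val b.val (by simpa [hmul] using congrArg Subtype.val h) with h' | h'
    · exact Or.inl (Subtype.ext h')
    · exact Or.inr (Subtype.ext h')⟩
  haveI : IsDomain ↥P := NoZeroDivisors.to_isDomain _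
  letI : DivisionRing ↥P := Fintype.divisionRingOfIsDomain ↥P
  letI : Field ↥P := littleWedderburn ↥P
  letI : Algebra F ↥P := Algebra.ofModule
    (fun a z z' => Subtype.ext (show S (a • z.val) z'.val = a • S z.val z'.val by simp))
    (fun a z z' => Subtype.ext (show S z.val (a • z'.val) = a • S z.val z'.val by simp))
  have hcardP : Fintype.card ↥P = q ^ d := by
    rw [← Nat.card_eq_fintype_card]
    exact (Nat.card_congr (Equiv.subtypeEquivRight (fun z => Iff.rfl))).trans hNr
  have hpow : ∀ x : ↥P, x ^ (Fintype.card K) = x := by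
    intro x
    have hc : Fintype.card K = (Fintype.card ↥P) ^ r := by
      rw [hcardP, hcK, ← pow_mul, hdm]
    rw [hc]
    exact FiniteField.pow_card_pow r x
  obtain ⟨φ⟩ := embed_exists F ↥P K hpow
  letI : Algebra ↥P K := φ.toRingHom.toAlgebra
  haveI : IsScalarTower F ↥P K :=
    IsScalarTower.of_algebraMap_eq (fun a => (φ.commutes a).symm)
  haveI : FiniteDimensional ↥P K := Module.Finite.of_finite
  have frK : finrank ↥P K = r :=
    finrank_of_card q d r hq2 hd1 ↥P K hcardP (by rw [hcK, hdm])
  -- the exotic module structure on the second argument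
  letI M3 : Module ↥P (Wrap 3 K) :=
    { smul := fun z w => ⟨S w.val z.val⟩
      one_smul := fun w => Wrap.ext (he2 w.val)
      mul_smul := fun z z' w => Wrap.ext (by
        have hc : S z.val z'.val = S z'.val z.val := congrArg Subtype.val (mul_comm z z')
        show S w.val (S z.val z'.val) = S (S w.val z'.val) z.val
        rw [hc]
        exact (hP z.val z.2 w.val z'.val).symm)
      smul_zero := fun z => Wrap.ext (show S (0 : K) z.val = 0 by simp)
      smul_add := fun z w w' => Wrap.ext
        (show S (w.val + w'.val) z.val = S w.val z.val + S w'.val z.val by simp)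
      add_smul := fun z z' w => Wrap.ext
        (show S w.val (z.val + z'.val) = S w.val z.val + S w.val z'.val by simp)
      zero_smul := fun w => Wrap.ext (show S w.val (0 : K) = 0 by simp) }
  haveI : IsScalarTower F ↥P (Wrap 3 K) := ⟨fun a z w => Wrap.ext
    (show S w.val (a • z.val) = a • S w.val z.val by simp)⟩
  haveI : FiniteDimensional ↥P (Wrap 3 K) := Module.Finite.of_finite
  have fr3 : finrank ↥P (Wrap 3 K) = r :=
    finrank_of_card q d r hq2 hd1 ↥P _ hcardP (by rw [Wrap.card, hcK, hdm])
  let T : Wrap 3 K ≃ₗ[↥P] K := LinearEquiv.ofFinrankEq _ _ (by rw [fr3, frK])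
  let b : Basis (Fin r) ↥P K := Module.finBasisOfFinrankEq ↥P K frK
  let i0 : Fin r := ⟨0, hr1⟩
  let S' : K → K → K := fun x y => T ⟨S x (T.symm y).val⟩
  -- S' x is ↥P-linear in the second argument
  have hlin : ∀ (z : ↥P) (x y : K), S' x (z • y) = z • S' x y := by
    intro z x y
    show T ⟨S x (T.symm (z • y)).val⟩ = z • T ⟨S x (T.symm y).val⟩
    have h1 : T.symm (z • y) = z • T.symm y := map_smul T.symm z y
    have h2 : z • T ⟨S x (T.symm y).val⟩
        = T (z • (⟨S x (T.symm y).val⟩ : Wrap 3 K)) := (map_smul T z _).symm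
    rw [h1, h2]
    congr 1
    apply Wrap.ext
    show S x (S (T.symm y).val z.val) = S (S x (T.symm y).val) z.val
    exact (hP z.val z.2 x (T.symm y).val).symm
  let ψ : K → (K →ₗ[↥P] K) := fun x =>
    { toFun := fun y => S' x y
      map_add' := by
        intro y y'
        show T ⟨S x (T.symm (y + y')).val⟩
          = T ⟨S x (T.symm y).val⟩ + T ⟨S x (T.symm y').val⟩
        have h1 : T.symm (y + y') = T.symm y + T.symm y' := map_add T.symm y y'
        have h2 : T ⟨S x (T.symm y).val⟩ + T ⟨S x (T.symm y').val⟩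
            = T (⟨S x (T.symm y).val⟩ + ⟨S x (T.symm y').val⟩) := (map_add T _ _).symm
        rw [h1, h2]
        congr 1
        apply Wrap.ext
        show S x ((T.symm y).val + (T.symm y').val)
          = S x (T.symm y).val + S x (T.symm y').val
        simp
      map_smul' := fun z y => hlin z x y }
  -- the map Θ
  let Θ : K →ₗ[↥P] (K →ₗ[↥P] ↥P) :=
    { toFun := fun a =>
        { toFun := fun y => b.repr (a * y) i0
          map_add' := by intro y y'; rw [mul_add, map_add, Finsupp.add_apply]
          map_smul' := by
            intro z y
            rw [Algebra.smul_def, mul_left_comm, ← Algebra.smul_def, map_smul,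
              Finsupp.smul_apply, smul_eq_mul, RingHom.id_apply, smul_eq_mul]
        }
      map_add' := by
        intro a a'
        apply LinearMap.ext
        intro y
        show b.repr ((a + a') * y) i0 = b.repr (a * y) i0 + b.repr (a' * y) i0
        rw [add_mul, map_add, Finsupp.add_apply]
      map_smul' := by
        intro z a
        apply LinearMap.ext
        intro y
        show b.repr ((z • a) * y) i0 = z * b.repr (a * y) i0
        rw [Algebra.smul_def, mul_assoc, ← Algebra.smul_def, map_smul,
          Finsupp.smul_apply, smul_eq_mul] }
  have hΘ : ∀ (a y : K), Θ a y = b.repr (a * y) i0 := fun a y => rfl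
  have hinj : Function.Injective Θ := by
    intro a a' h
    by_contra hne
    have hc : a - a' ≠ 0 := sub_ne_zero.mpr hne
    have h0 : Θ (a - a') = 0 := by rw [map_sub, h, sub_self]
    have h1 : Θ (a - a') ((a - a')⁻¹ * b i0) = b.repr (b i0) i0 := by
      rw [hΘ, ← mul_assoc, mul_inv_cancel₀ hc, one_mul]
    rw [h0, LinearMap.zero_apply, b.repr_self, Finsupp.single_eq_same] at h1
    exact zero_ne_one h1
  have hdim : finrank ↥P K = finrank ↥P (K →ₗ[↥P] ↥P) :=
    (Module.finrank_linearMap_self (R := ↥P) (S := ↥P) (M := K)).symm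
  haveI : FiniteDimensional ↥P (K →ₗ[↥P] ↥P) := inferInstance
  let E : K ≃ₗ[↥P] (K →ₗ[↥P] ↥P) := LinearMap.linearEquivOfInjective Θ hinj hdim
  have hE : ∀ (a y : K), E a y = b.repr (a * y) i0 := fun a y => rfl
  -- the maps f and g
  let f : Fin r → (K →ₗ[F] K) := fun j =>
    { toFun := fun x => E.symm ((b.coord j) ∘ₗ (ψ x))
      map_add' := by
        intro x x'
        have hψ : ψ (x + x') = ψ x + ψ x' := by
          apply LinearMap.ext
          intro y
          show T ⟨S (x + x') (T.symm y).val⟩ = T ⟨S x (T.symm y).val⟩ + T ⟨S x' (T.symm y).val⟩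
          rw [← map_add]
          congr 1
          apply Wrap.ext
          show S (x + x') (T.symm y).val = S x (T.symm y).val + S x' (T.symm y).val
          simp [map_add, LinearMap.add_apply]
        rw [hψ, LinearMap.comp_add, map_add]
      map_smul' := by
        intro a x
        have hψ : ψ (a • x) = (algebraMap F ↥P a) • ψ x := by
          apply LinearMap.ext
          intro y
          show T ⟨S (a • x) (T.symm y).val⟩ = (algebraMap F ↥P a) • T ⟨S x (T.symm y).val⟩
          rw [← map_smul T (algebraMap F ↥P a) (⟨S x (T.symm y).val⟩ : Wrap 3 K)]
          congr 1
          apply Wrap.ext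
          show S (a • x) (T.symm y).val
            = ((algebraMap F ↥P a) • (⟨S x (T.symm y).val⟩ : Wrap 3 K)).val
          rw [IsScalarTower.algebraMap_smul]
          show S (a • x) (T.symm y).val = a • (S x (T.symm y).val)
          simp
        rw [hψ, LinearMap.comp_smul, map_smul, IsScalarTower.algebraMap_smul]
        rfl }
  let g : Fin r → (K →ₗ[F] K) := fun j =>
    { toFun := fun w => b j * algebraMap ↥P K (b.repr w i0)
      map_add' := by
        intro w w'
        rw [map_add, Finsupp.add_apply, map_add, mul_add]
      map_smul' := by
        intro a w
        rw [← IsScalarTower.algebraMap_smul (↥P) a w, map_smul, Finsupp.smul_apply,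
          smul_eq_mul, map_mul, ← IsScalarTower.algebraMap_apply, RingHom.id_apply]
        rw [Algebra.smul_def]
        ring }
  let Gm : K ≃ₗ[F] K := (Wrap.lequiv 3 F K).symm.trans (T.restrictScalars F)
  refine ⟨S', f, g, ⟨LinearEquiv.refl F K, Gm, Gm, ?_⟩, ?_⟩
  · intro x y
    show T ⟨S x ((T.symm (T ⟨y⟩)).val)⟩ = T ⟨S x y⟩
    rw [T.symm_apply_apply]
  · intro x y
    have key : ∀ j : Fin r, b.repr ((E.symm ((b.coord j) ∘ₗ (ψ x))) * y) i0
        = b.repr (S' x y) j := by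
      intro j
      have h1 := E.apply_symm_apply ((b.coord j) ∘ₗ (ψ x))
      have h2 := LinearMap.congr_fun h1 y
      exact h2
    calc S' x y = ∑ j, b.repr (S' x y) j • b j := (b.sum_repr (S' x y)).symm
      _ = ∑ j, g j (f j x * y) := by
          refine Finset.sum_congr rfl (fun j _ => ?_)
          show b.repr (S' x y) j • b j = b j * algebraMap ↥P K (b.repr (f j x * y) i0)
          have hfj : f j x = E.symm ((b.coord j) ∘ₗ (ψ x)) := rfl
          rw [hfj, key j, Algebra.smul_def]
          ring

/-- if a semifield `S` has dimension `m` over its middle nucleus and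
dimension `r` over its right nucleus, then `brk(S) ≤ min m r`. -/
theorem stmt17 (q n : ℕ) (hq : IsPrimePow q) (hn : 1 ≤ n)
    (F K : Type) [Field F] [Field K] [Algebra F K] [Fintype F] [Fintype K]
    (hcF : Fintype.card F = q) (hcK : Fintype.card K = q ^ n)
    (S : K →ₗ[F] K →ₗ[F] K)
    (hpre : ∀ x y : K, S x y = 0 → x = 0 ∨ y = 0)
    (e : K) (he : ∀ x : K, S e x = x ∧ S x e = x)
    (m r : ℕ) (hm1 : 1 ≤ m) (hr1 : 1 ≤ r) (hmn : m ∣ n) (hrn : r ∣ n)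
    (hNm : Nat.card {z : K // ∀ x y : K, S (S x z) y = S x (S z y)} = q ^ (n / m))
    (hNr : Nat.card {z : K // ∀ x y : K, S (S x y) z = S x (S y z)} = q ^ (n / r)) :
    sInf (brkSet F K (fun x y => S x y)) ≤ min m r := by
  have hmem_m : m ∈ brkSet F K (fun x y => S x y) :=
    mid_mem q n hq hn F K hcK S hpre e he m hm1 hmn hNm
  have hmem_r : r ∈ brkSet F K (fun x y => S x y) :=
    right_mem q n hq hn F K hcK S hpre e he r hr1 hrn hNr
  rcases le_total m r with h | h
  · rw [min_eq_left h]
    exact Nat.sInf_le hmem_m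
  · rw [min_eq_right h]
    exact Nat.sInf_le hmem_r
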